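/- If K' is a compact subset of the reals with packing dimension strictly less than 1, and N is a positive integer with N > 1/(1 - dim_p K'), then the set F_N = {(x_0,...,x_{N-1}) ∈ ℝ^N : ∃ t ∈ ℝ, {x_0,...,x_{N-1}} ⊆ K' + t} has packing dimension at most N·dim_p K' + 1, which is strictly less than N. -/

import Mathlib

open Filter Set MeasureTheory
open scoped Pointwise ENNReal

/-- Minimal number of `ε`-balls needed to cover `s` (as an element of `ℝ≥0∞`,
`⊤` if no finite cover exists). -/
noncomputable def coverN {α : Type*} [PseudoMetricSpace α] (s : Set α) (ε : ℝ) : ℝ≥0∞ :=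
  ⨅ (t : Finset α) (_ : s ⊆ ⋃ x ∈ t, Metric.ball x ε), (t.card : ℝ≥0∞)

open Classical in
/-- Upper box (Minkowski) dimension. -/
noncomputable def ubDim {α : Type*} [PseudoMetricSpace α] (s : Set α) : ℝ≥0∞ :=
  Filter.limsup (fun ε : ℝ =>
      if coverN s ε = ⊤ then ⊤
      else ENNReal.ofReal (Real.log (coverN s ε).toReal / Real.log ε⁻¹))
    (nhdsWithin (0 : ℝ) (Set.Ioi 0))

/-- Packing dimension, defined as modified upper box dimension. -/
noncomputable def packingDim {α : Type*} [PseudoMetricSpace α] (s : Set α) : ℝ≥0∞ :=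
  ⨅ (A : ℕ → Set α) (_ : s ⊆ ⋃ n, A n), ⨆ n, ubDim (A n)


lemma coverN_anti {α : Type*} [PseudoMetricSpace α] (s : Set α) {ε ε' : ℝ} (h : ε ≤ ε') :
    coverN s ε' ≤ coverN s ε := by
  refine le_iInf₂ fun t ht => iInf₂_le t (ht.trans ?_)
  exact Set.iUnion₂_mono fun x _ => Metric.ball_subset_ball h

lemma exists_cover_of_coverN_lt_top {α : Type*} [PseudoMetricSpace α] {s : Set α} {ε : ℝ}
    {K : ℝ≥0∞} (h : coverN s ε ≤ K) (hK : K ≠ ⊤) :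
    ∃ t : Finset α, s ⊆ (⋃ x ∈ t, Metric.ball x ε) ∧ (t.card : ℝ≥0∞) ≤ K + 1 := by
  have h2 : coverN s ε < K + 1 := h.trans_lt (ENNReal.lt_add_right hK one_ne_zero)
  rw [coverN, iInf_lt_iff] at h2
  obtain ⟨t, ht⟩ := h2
  rw [iInf_lt_iff] at ht
  obtain ⟨hcov, hcard⟩ := ht
  exact ⟨t, hcov, hcard.le⟩

lemma ubDim_le_of_eventually {α : Type*} [PseudoMetricSpace α] {s : Set α} {d : ℝ}
    (hd : 0 ≤ d)
    (h : ∀ᶠ ε in nhdsWithin (0:ℝ) (Set.Ioi 0), coverN s ε ≤ ENNReal.ofReal (ε ^ (-d))) :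
    ubDim s ≤ ENNReal.ofReal d := by
  classical
  rw [ubDim]
  refine Filter.limsup_le_of_le isCobounded_le_of_bot ?_
  have hIoo : Set.Ioo (0:ℝ) 1 ∈ nhdsWithin (0:ℝ) (Set.Ioi 0) :=
    Ioo_mem_nhdsGT_of_mem (by norm_num : (0:ℝ) ∈ Set.Ico (0:ℝ) 1)
  filter_upwards [h, hIoo] with ε hε hε01
  have hεpos : 0 < ε := hε01.1
  have hε1 : ε < 1 := hε01.2
  have hne : coverN s ε ≠ ⊤ := by
    intro hc; rw [hc] at hε; exact (ENNReal.ofReal_lt_top.trans_le hε).ne rfl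
  rw [if_neg hne]
  set n : ℝ := (coverN s ε).toReal with hn
  have hlogε : 0 < Real.log ε⁻¹ := Real.log_pos (by rw [lt_inv_comm₀] <;> simp [hεpos, hε1])
  have hnb : n ≤ ε ^ (-d) := by
    have := ENNReal.toReal_mono (by simp) hε
    simpa [ENNReal.toReal_ofReal (Real.rpow_nonneg hεpos.le _)] using this
  have hlog : Real.log n ≤ d * Real.log ε⁻¹ := by
    rcases le_or_gt n 1 with hle | hlt
    · have : Real.log n ≤ 0 := Real.log_nonpos (ENNReal.toReal_nonneg) hle
      exact this.trans (by positivity)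
    · calc Real.log n ≤ Real.log (ε ^ (-d)) := Real.log_le_log (by linarith) hnb
        _ = -d * Real.log ε := Real.log_rpow hεpos _
        _ = d * Real.log ε⁻¹ := by rw [Real.log_inv]; ring
  refine ENNReal.ofReal_le_ofReal ?_
  rw [div_le_iff₀ hlogε]
  linarith [hlog]

lemma eventually_coverN_le_of_ubDim_lt {α : Type*} [PseudoMetricSpace α] {s : Set α} {d : ℝ}
    (hd : 0 < d) (h : ubDim s < ENNReal.ofReal d) :
    ∀ᶠ ε in nhdsWithin (0:ℝ) (Set.Ioi 0), coverN s ε ≤ ENNReal.ofReal (ε ^ (-d)) := by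
  classical
  rw [ubDim] at h
  have hev := Filter.eventually_lt_of_limsup_lt h
  have hIoo : Set.Ioo (0:ℝ) 1 ∈ nhdsWithin (0:ℝ) (Set.Ioi 0) :=
    Ioo_mem_nhdsGT_of_mem (by norm_num : (0:ℝ) ∈ Set.Ico (0:ℝ) 1)
  filter_upwards [hev, hIoo] with ε hε hε01
  have hεpos : 0 < ε := hε01.1
  have hε1 : ε < 1 := hε01.2
  beta_reduce at hε
  have hne : coverN s ε ≠ ⊤ := by
    intro hc; rw [if_pos hc] at hε; exact (not_top_lt hε)
  rw [if_neg hne] at hε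
  set n : ℝ := (coverN s ε).toReal with hn
  have hlogε : 0 < Real.log ε⁻¹ := Real.log_pos (by rw [lt_inv_comm₀] <;> simp [hεpos, hε1])
  have hεd : (0:ℝ) < ε ^ (-d) := Real.rpow_pos_of_pos hεpos _
  have hdiv : Real.log n / Real.log ε⁻¹ < d := by
    by_contra hcon
    push_neg at hcon
    have := ENNReal.ofReal_le_ofReal hcon
    exact absurd hε (not_lt.2 this)
  have hlog : Real.log n < d * Real.log ε⁻¹ := (div_lt_iff₀ hlogε).1 hdiv
  have hnb : n ≤ ε ^ (-d) := by
    rcases le_or_gt n 0 with h0 | h0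
    · linarith
    · have : Real.log n < Real.log (ε ^ (-d)) := by
        rw [Real.log_rpow hεpos (-d), Real.log_inv] at *
        linarith
      exact ((Real.log_lt_log_iff h0 hεd).1 this).le
  calc coverN s ε = ENNReal.ofReal n := (ENNReal.ofReal_toReal hne).symm
    _ ≤ ENNReal.ofReal (ε ^ (-d)) := ENNReal.ofReal_le_ofReal hnb

lemma interval_cover (m ε : ℝ) (hε : 0 < ε) (hε1 : ε ≤ 1) :
    ∃ u : Finset ℝ, (Set.Icc m (m+1) ⊆ ⋃ x ∈ u, Metric.ball x ε) ∧
      (u.card : ℝ≥0∞) ≤ ENNReal.ofReal (3 / ε) := by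
  classical
  refine ⟨Finset.image (fun j : ℕ => m + j*ε) (Finset.range (⌈1/ε⌉₊+1)), ?_, ?_⟩
  · intro s hs
    obtain ⟨hs1, hs2⟩ := hs
    set j := ⌊(s-m)/ε⌋₊ with hj
    have hnn : 0 ≤ (s-m)/ε := div_nonneg (by linarith) hε.le
    have h1 : (j:ℝ) * ε ≤ s - m := by
      have h := mul_le_mul_of_nonneg_right (Nat.floor_le hnn) hε.le
      rwa [div_mul_cancel₀ _ hε.ne'] at h
    have h2 : s - m < (j+1) * ε := by
      have := Nat.lt_floor_add_one ((s-m)/ε)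
      rw [div_lt_iff₀ hε] at this
      push_cast
      linarith
    have hjle : j ≤ ⌈1/ε⌉₊ := by
      have : (s-m)/ε ≤ 1/ε := by gcongr <;> linarith
      calc j ≤ ⌊1/ε⌋₊ := Nat.floor_le_floor this
        _ ≤ ⌈1/ε⌉₊ := Nat.floor_le_ceil _
    refine Set.mem_iUnion₂.2 ⟨m + j*ε, ?_, ?_⟩
    · exact Finset.mem_image.2 ⟨j, Finset.mem_range.2 (Nat.lt_succ_of_le hjle), rfl⟩
    · rw [Metric.mem_ball, Real.dist_eq, abs_of_nonneg (by linarith)]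
      push_cast at h2
      linarith
  · have h1 : (Finset.image (fun j : ℕ => m + j*ε) (Finset.range (⌈1/ε⌉₊+1))).card
        ≤ ⌈1/ε⌉₊+1 := (Finset.card_image_le).trans (by simp)
    have h2 : ((⌈1/ε⌉₊:ℝ)+1) ≤ 3/ε := by
      have hc : (⌈1/ε⌉₊:ℝ) < 1/ε + 1 := Nat.ceil_lt_add_one (by positivity)
      have : (1:ℝ) ≤ 1/ε := by rw [le_div_iff₀ hε]; linarith
      have h3 : 3/ε = 3 * (1/ε) := by ring
      rw [h3]; linarith
    calc ((Finset.image (fun j : ℕ => m + j*ε) (Finset.range (⌈1/ε⌉₊+1))).card : ℝ≥0∞)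
        ≤ ((⌈1/ε⌉₊+1 : ℕ) : ℝ≥0∞) := by exact_mod_cast h1
      _ = ENNReal.ofReal ((⌈1/ε⌉₊:ℝ)+1) := by
          rw [← ENNReal.ofReal_natCast]; norm_num
      _ ≤ ENNReal.ofReal (3/ε) := ENNReal.ofReal_le_ofReal h2

lemma piece_cover (N : ℕ) (hN : 0 < N) (C : Fin N → Set ℝ) (m : ℝ) (ε : ℝ) (hε : 0 < ε)
    (t : Fin N → Finset ℝ) (ht : ∀ i, C i ⊆ ⋃ x ∈ t i, Metric.ball x ε)
    (u : Finset ℝ) (hu : Set.Icc m (m+1) ⊆ ⋃ x ∈ u, Metric.ball x ε) :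
    coverN {x : EuclideanSpace ℝ (Fin N) | ∃ s ∈ Set.Icc m (m+1), ∀ i, x i - s ∈ C i}
        (2 * Real.sqrt N * ε)
      ≤ (∏ i, ((t i).card : ℝ≥0∞)) * u.card := by
  classical
  set T : Finset (EuclideanSpace ℝ (Fin N)) :=
    Finset.image (fun p : (Fin N → ℝ) × ℝ =>
      (WithLp.equiv 2 (Fin N → ℝ)).symm (fun i => p.1 i + p.2)) ((Fintype.piFinset t) ×ˢ u)
    with hT
  have hcov : {x : EuclideanSpace ℝ (Fin N) | ∃ s ∈ Set.Icc m (m+1), ∀ i, x i - s ∈ C i}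
      ⊆ ⋃ y ∈ T, Metric.ball y (2 * Real.sqrt N * ε) := by
    rintro x ⟨s, hs, hx⟩
    have hci : ∀ i, ∃ c ∈ t i, dist (x i - s) c < ε := by
      intro i
      have := ht i (hx i)
      simpa [Metric.mem_ball, dist_comm] using this
    choose c hc hcd using hci
    have hτ : ∃ τ ∈ u, dist s τ < ε := by
      have := hu hs
      simpa [Metric.mem_ball, dist_comm] using this
    obtain ⟨τ, hτu, hτd⟩ := hτ
    refine Set.mem_iUnion₂.2 ⟨(WithLp.equiv 2 (Fin N → ℝ)).symm (fun i => c i + τ), ?_, ?_⟩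
    · refine Finset.mem_image.2 ⟨(c, τ), ?_, rfl⟩
      exact Finset.mem_product.2 ⟨Fintype.mem_piFinset.2 hc, hτu⟩
    · rw [Metric.mem_ball, EuclideanSpace.dist_eq]
      have hterm : ∀ i : Fin N,
          dist (x i) (((WithLp.equiv 2 (Fin N → ℝ)).symm (fun i => c i + τ)) i) ^ 2
            < (2*ε)^2 := by
        intro i
        have h1 : dist (x i) (c i + τ) < 2 * ε := by
          have : dist (x i) (c i + τ) ≤ dist (x i - s) (c i) + dist s τ := by
            rw [Real.dist_eq, Real.dist_eq, Real.dist_eq]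
            have : x i - (c i + τ) = (x i - s - c i) + (s - τ) := by ring
            rw [this]
            exact abs_add_le _ _
          linarith [hcd i, hτd]
        have h2 : (0:ℝ) ≤ dist (x i) (c i + τ) := dist_nonneg
        have := sq_lt_sq' (by linarith) h1
        simpa using this
      have hsum : ∑ i, dist (x i) (((WithLp.equiv 2 (Fin N → ℝ)).symm (fun i => c i + τ)) i) ^ 2
          < ∑ _i : Fin N, (2*ε)^2 := by
        refine Finset.sum_lt_sum_of_nonempty ?_ (fun i _ => hterm i)
        have : Nonempty (Fin N) := Fin.pos_iff_nonempty.1 hN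
        exact Finset.univ_nonempty
      have hNε : ∑ _i : Fin N, (2*ε)^2 = N * (2*ε)^2 := by
        simp [Finset.sum_const, mul_comm]
      rw [hNε] at hsum
      calc Real.sqrt (∑ i, dist (x i) _ ^ 2) < Real.sqrt (N * (2*ε)^2) := by
            exact Real.sqrt_lt_sqrt (by positivity) hsum
        _ = 2 * Real.sqrt N * ε := by
            rw [Real.sqrt_mul (by positivity), Real.sqrt_sq (by positivity)]
            ring
  calc coverN _ _ ≤ (T.card : ℝ≥0∞) := iInf₂_le T hcov
    _ ≤ (∏ i, ((t i).card : ℝ≥0∞)) * u.card := by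
        have h1 : T.card ≤ (∏ i, (t i).card) * u.card := by
          refine (Finset.card_image_le).trans ?_
          rw [Finset.card_product, Fintype.card_piFinset]
        calc (T.card : ℝ≥0∞) ≤ ((∏ i, (t i).card) * u.card : ℕ) := by exact_mod_cast h1
          _ = (∏ i, ((t i).card : ℝ≥0∞)) * u.card := by push_cast; ring

lemma piece_eventually (N : ℕ) (hN : 0 < N) (C : Fin N → Set ℝ) {d' δ₀ : ℝ}
    (hd' : 0 < d') (hδ₀ : 0 < δ₀)
    (hC : ∀ i, ∀ᶠ ε in nhdsWithin (0:ℝ) (Set.Ioi 0),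
        coverN (C i) ε ≤ ENNReal.ofReal (ε ^ (-d')))
    (m : ℝ) :
    ∀ᶠ δ in nhdsWithin (0:ℝ) (Set.Ioi 0),
      coverN {x : EuclideanSpace ℝ (Fin N) | ∃ s ∈ Set.Icc m (m+1), ∀ i, x i - s ∈ C i} δ
        ≤ ENNReal.ofReal (δ ^ (-(N * d' + 1 + δ₀))) := by
  classical
  set c : ℝ := 2 * Real.sqrt N with hc
  have hcpos : 0 < c := by
    have : (0:ℝ) < Real.sqrt N := Real.sqrt_pos.2 (by exact_mod_cast hN)
    positivity
  set E : ℝ := N * d' + 1 with hE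
  have hEpos : 0 < E := by positivity
  set A : ℝ := 3 * 2^N * c^E with hA
  have hApos : 0 < A := by positivity
  set ρ : ℝ := min 1 (A ^ (-(1/δ₀))) with hρ
  have hρpos : 0 < ρ := lt_min one_pos (Real.rpow_pos_of_pos hApos _)
  have htend : Tendsto (fun δ : ℝ => δ / c) (nhdsWithin 0 (Set.Ioi 0))
      (nhdsWithin 0 (Set.Ioi 0)) := by
    apply tendsto_nhdsWithin_of_tendsto_nhds_of_eventually_within
    · exact ((continuous_id.div_const c).tendsto' 0 0 (by simp)).mono_left nhdsWithin_le_nhds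
    · filter_upwards [self_mem_nhdsWithin] with δ (hδ : δ ∈ Set.Ioi 0)
      exact div_pos hδ hcpos
  have hIoo : Set.Ioo (0:ℝ) 1 ∈ nhdsWithin (0:ℝ) (Set.Ioi 0) :=
    Ioo_mem_nhdsGT_of_mem (by norm_num : (0:ℝ) ∈ Set.Ico (0:ℝ) 1)
  have hIooρ : Set.Ioo (0:ℝ) ρ ∈ nhdsWithin (0:ℝ) (Set.Ioi 0) :=
    Ioo_mem_nhdsGT_of_mem ⟨le_refl 0, hρpos⟩
  filter_upwards [htend.eventually (eventually_all.2 hC), htend.eventually hIoo, hIooρ]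
    with δ hCδ hδc hδρ
  set ε : ℝ := δ / c with hε
  have hεpos : 0 < ε := hδc.1
  have hε1 : ε < 1 := hδc.2
  have hδpos : 0 < δ := hδρ.1
  choose t ht hcard using fun i =>
    exists_cover_of_coverN_lt_top (hCδ i) (ENNReal.ofReal_ne_top)
  obtain ⟨u, hu, hucard⟩ := interval_cover m ε hεpos hε1.le
  have hmain := piece_cover N hN C m ε hεpos t ht u hu
  have hδeq : 2 * Real.sqrt N * ε = δ := by
    rw [hε, ← hc]; field_simp [hcpos.ne']
  rw [hδeq] at hmain
  have hεd1 : (1:ℝ) ≤ ε ^ (-d') := by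
    have h0 : ε ^ d' ≤ 1 := Real.rpow_le_one hεpos.le hε1.le hd'.le
    rw [Real.rpow_neg hεpos.le]
    exact (one_le_inv₀ (Real.rpow_pos_of_pos hεpos d')).2 h0
  have hcard2 : ∀ i, ((t i).card : ℝ≥0∞) ≤ ENNReal.ofReal (2 * ε ^ (-d')) := by
    intro i
    refine (hcard i).trans ?_
    rw [← ENNReal.ofReal_one, ← ENNReal.ofReal_add (by positivity) (by norm_num)]
    exact ENNReal.ofReal_le_ofReal (by linarith)
  have hprod : (∏ i, ((t i).card : ℝ≥0∞)) ≤ ENNReal.ofReal ((2 * ε ^ (-d'))^N) := by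
    calc (∏ i, ((t i).card : ℝ≥0∞)) ≤ ∏ _i : Fin N, ENNReal.ofReal (2 * ε ^ (-d')) :=
          Finset.prod_le_prod' (fun i _ => hcard2 i)
      _ = (ENNReal.ofReal (2 * ε ^ (-d')))^N := by
          rw [Finset.prod_const, Finset.card_univ, Fintype.card_fin]
      _ = ENNReal.ofReal ((2 * ε ^ (-d'))^N) := (ENNReal.ofReal_pow (by positivity) N).symm
  have hstep : coverN {x : EuclideanSpace ℝ (Fin N) | ∃ s ∈ Set.Icc m (m+1), ∀ i, x i - s ∈ C i} δ
      ≤ ENNReal.ofReal ((2 * ε ^ (-d'))^N * (3 / ε)) := by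
    refine hmain.trans ?_
    rw [ENNReal.ofReal_mul (by positivity)]
    exact mul_le_mul' hprod hucard
  refine hstep.trans (ENNReal.ofReal_le_ofReal ?_)
  have key1 : (2 * ε ^ (-d'))^N * (3 / ε) = A * δ ^ (-E) := by
    have e1 : (ε ^ (-d'))^N = ε ^ (-(N * d' : ℝ)) := by
      rw [← Real.rpow_natCast (ε ^ (-d')) N, ← Real.rpow_mul hεpos.le]
      ring_nf
    have e2 : (3:ℝ) / ε = 3 * ε ^ (-1:ℝ) := by
      rw [Real.rpow_neg_one]; ring
    have e3 : ε ^ (-(N * d' : ℝ)) * ε ^ (-1:ℝ) = ε ^ (-E) := by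
      rw [← Real.rpow_add hεpos, hE]; ring_nf
    have e4 : ε ^ (-E) = δ ^ (-E) * c ^ E := by
      have hcE : c ^ E ≠ 0 := (Real.rpow_pos_of_pos hcpos E).ne'
      have h5 : (δ / c) ^ (-E) = ((δ/c)^E)⁻¹ :=
        Real.rpow_neg (by positivity : (0:ℝ) ≤ δ/c) E
      rw [hε, h5, Real.div_rpow hδpos.le hcpos.le, Real.rpow_neg hδpos.le]
      field_simp
    rw [mul_pow, e1, e2]
    calc 2^N * ε ^ (-(N*d':ℝ)) * (3 * ε ^ (-1:ℝ))
        = 3 * 2^N * (ε ^ (-(N*d':ℝ)) * ε ^ (-1:ℝ)) := by ring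
      _ = 3 * 2^N * ε ^ (-E) := by rw [e3]
      _ = A * δ ^ (-E) := by rw [e4, hA]; ring
  rw [key1]
  have hAδ : A ≤ δ ^ (-δ₀) := by
    have hδρ2 : δ < A ^ (-(1/δ₀)) := lt_of_lt_of_le hδρ.2 (min_le_right _ _)
    have h1 : A ^ (1/δ₀) ≤ δ⁻¹ := by
      calc A ^ (1/δ₀) = (A ^ (-(1/δ₀)))⁻¹ := by
            rw [← Real.rpow_neg hApos.le]; ring_nf
        _ ≤ δ⁻¹ := by
            apply inv_anti₀ hδpos hδρ2.le
    calc A = (A ^ (1/δ₀)) ^ δ₀ := by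
          rw [← Real.rpow_mul hApos.le, one_div_mul_cancel hδ₀.ne', Real.rpow_one]
      _ ≤ (δ⁻¹) ^ δ₀ := Real.rpow_le_rpow (Real.rpow_nonneg hApos.le _) h1 hδ₀.le
      _ = δ ^ (-δ₀) := by
          rw [Real.rpow_neg hδpos.le δ₀]; exact Real.inv_rpow hδpos.le δ₀
  calc A * δ ^ (-E) ≤ δ ^ (-δ₀) * δ ^ (-E) :=
        mul_le_mul_of_nonneg_right hAδ (Real.rpow_nonneg hδpos.le _)
    _ = δ ^ (-(E + δ₀)) := by rw [← Real.rpow_add hδpos]; ring_nf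

theorem stmt0 (K' : Set ℝ) (hK : IsCompact K') (hdim : packingDim K' < 1)
    (N : ℕ) (hN : 0 < N)
    (hNbig : ((1 : ℝ≥0∞) - packingDim K')⁻¹ < (N : ℝ≥0∞)) :
    packingDim {x : EuclideanSpace ℝ (Fin N) | ∃ t : ℝ, ∀ i, x i ∈ (fun k => k + t) '' K'}
        ≤ (N : ℝ≥0∞) * packingDim K' + 1 ∧
    packingDim {x : EuclideanSpace ℝ (Fin N) | ∃ t : ℝ, ∀ i, x i ∈ (fun k => k + t) '' K'}
        < (N : ℝ≥0∞) := by
  classical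
  set d : ℝ≥0∞ := packingDim K' with hd
  have hdne : d ≠ ⊤ := (hdim.trans_le le_top).ne
  set F : Set (EuclideanSpace ℝ (Fin N)) :=
    {x : EuclideanSpace ℝ (Fin N) | ∃ t : ℝ, ∀ i, x i ∈ (fun k => k + t) '' K'} with hF
  have part1 : packingDim F ≤ (N : ℝ≥0∞) * d + 1 := by
    refine ENNReal.le_of_forall_pos_le_add fun r hr _ => ?_
    set δ : ℝ := (r : ℝ) / ((N : ℝ) + 1) with hδdef
    have hδpos : 0 < δ := by
      apply div_pos (by exact_mod_cast hr) (by positivity)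
    set d' : ℝ := d.toReal + δ with hd'def
    have hd'pos : 0 < d' := by positivity
    have hlt : packingDim K' < ENNReal.ofReal d' := by
      rw [hd'def, ENNReal.ofReal_add ENNReal.toReal_nonneg hδpos.le,
        ENNReal.ofReal_toReal hdne]
      exact ENNReal.lt_add_right hdne (by simp [ENNReal.ofReal_eq_zero]; linarith)
    rw [packingDim, iInf_lt_iff] at hlt
    obtain ⟨A, hA⟩ := hlt
    rw [iInf_lt_iff] at hA
    obtain ⟨hcov, hsup⟩ := hA
    have hAn : ∀ n, ubDim (A n) < ENNReal.ofReal d' :=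
      fun n => lt_of_le_of_lt (le_iSup (fun n => ubDim (A n)) n) hsup
    have hAev : ∀ n, ∀ᶠ ε in nhdsWithin (0:ℝ) (Set.Ioi 0),
        coverN (A n) ε ≤ ENNReal.ofReal (ε ^ (-d')) :=
      fun n => eventually_coverN_le_of_ubDim_lt hd'pos (hAn n)
    -- the pieces
    set B : (Fin N → ℕ) → ℤ → Set (EuclideanSpace ℝ (Fin N)) := fun σ m =>
      {x : EuclideanSpace ℝ (Fin N) |
        ∃ s ∈ Set.Icc (m : ℝ) ((m : ℝ) + 1), ∀ i, x i - s ∈ A (σ i)} with hB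
    have hpiece : ∀ σ m, ubDim (B σ m) ≤ ENNReal.ofReal ((N : ℝ) * d' + 1 + δ) := by
      intro σ m
      refine ubDim_le_of_eventually (by positivity) ?_
      exact piece_eventually N hN (fun i => A (σ i)) hd'pos hδpos (fun i => hAev (σ i)) (m : ℝ)
    obtain ⟨f, hf⟩ := exists_surjective_nat ((Fin N → ℕ) × ℤ)
    have hcover : F ⊆ ⋃ n, B (f n).1 (f n).2 := by
      intro x hx
      obtain ⟨t, ht⟩ := hx
      have hmem : ∀ i, x i - t ∈ K' := by
        intro i
        obtain ⟨k, hk, hkt⟩ := ht i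
        have : x i - t = k := by simp at hkt; linarith
        rwa [this]
      have hσ : ∀ i, ∃ n, x i - t ∈ A n := by
        intro i
        have := hcov (hmem i)
        simpa using this
      choose σ hσ using hσ
      have hxB : x ∈ B σ ⌊t⌋ := by
        refine ⟨t, ⟨Int.floor_le t, (Int.lt_floor_add_one t).le⟩, hσ⟩
      obtain ⟨n, hn⟩ := hf (σ, ⌊t⌋)
      refine Set.mem_iUnion.2 ⟨n, ?_⟩
      rw [hn]
      exact hxB
    have hle : packingDim F ≤ ⨆ n, ubDim (B (f n).1 (f n).2) :=
      iInf₂_le (fun n => B (f n).1 (f n).2) hcover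
    have hle2 : packingDim F ≤ ENNReal.ofReal ((N : ℝ) * d' + 1 + δ) :=
      hle.trans (iSup_le fun n => hpiece _ _)
    refine hle2.trans ?_
    have heq : (N : ℝ) * d' + 1 + δ = (N : ℝ) * d.toReal + 1 + ((N : ℝ) + 1) * δ := by
      rw [hd'def]; ring
    have hδr : (((N : ℝ) + 1) * δ) = (r : ℝ) := by
      rw [hδdef]; field_simp
    rw [heq, hδr, ENNReal.ofReal_add (by positivity) (NNReal.coe_nonneg r),
      ENNReal.ofReal_add (by positivity) (by norm_num : (0:ℝ) ≤ 1),
      ENNReal.ofReal_mul (by positivity), ENNReal.ofReal_toReal hdne,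
      ENNReal.ofReal_natCast, ENNReal.ofReal_one, ENNReal.ofReal_coe_nnreal]
  refine ⟨part1, ?_⟩
  have h1d : (0:ℝ≥0∞) < 1 - d := tsub_pos_iff_lt.2 hdim
  have hfin : (1:ℝ≥0∞) - d ≠ ⊤ := (tsub_le_self.trans_lt ENNReal.one_lt_top).ne
  have key : (1:ℝ≥0∞) < (N : ℝ≥0∞) * (1 - d) := by
    calc (1:ℝ≥0∞) = (1 - d)⁻¹ * (1 - d) := (ENNReal.inv_mul_cancel h1d.ne' hfin).symm
      _ < (N : ℝ≥0∞) * (1 - d) := ENNReal.mul_lt_mul_left h1d.ne' hfin hNbig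
  have hNd : (N : ℝ≥0∞) * d ≠ ⊤ := ENNReal.mul_ne_top (ENNReal.natCast_ne_top N) hdne
  have step : (N : ℝ≥0∞) * d + 1 < (N : ℝ≥0∞) := by
    calc (N : ℝ≥0∞) * d + 1 < (N : ℝ≥0∞) * d + (N : ℝ≥0∞) * (1 - d) :=
          ENNReal.add_lt_add_left hNd key
      _ = (N : ℝ≥0∞) * (d + (1 - d)) := by rw [mul_add]
      _ = (N : ℝ≥0∞) := by
          rw [add_comm d, tsub_add_cancel_of_le hdim.le, mul_one]
  exact lt_of_le_of_lt part1 step
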